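/- arXiv:1706.04006 — 2 statements merged into one kernel-verified Lean document; each statement's English description precedes it below -/
import Mathlib

section
/- Let L be a lattice (finitely generated free ℤ-module with a symmetric bilinear form) and let e ∈ L be a primitive vector with e² = -2k (k a positive integer) such that (2/2k)·e lies in the dual lattice L^∨ (i.e. e is a 2k-root). Then the index of ⟨e⟩ ⊕ (L ∩ e^⊥) in L is 1 or 2. -/
/-- For a lattice `L` (f.g. free ℤ-module with nondegenerate symmetric bilinear form `B`)
and a primitive `2k`-root `e` (i.e. `B e e = -2k` and `(e, L) ⊆ kℤ`), the index of
`⟨e⟩ ⊕ (L ∩ e^⊥)` in `L` is `1` or `2`. -/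
theorem stmt0 (M : Type*) [AddCommGroup M] [Module ℤ M]
    [Module.Finite ℤ M] [Module.Free ℤ M]
    (B : M →ₗ[ℤ] M →ₗ[ℤ] ℤ)
    (hsymm : ∀ x y : M, B x y = B y x)
    (hnondeg : ∀ x : M, (∀ y : M, B x y = 0) → x = 0)
    (e : M)
    (hprim : ∀ (n : ℤ) (v : M), e = n • v → IsUnit n)
    (k : ℕ) (hk : 0 < k)
    (he : B e e = -(2 * (k : ℤ)))
    (hdual : ∀ x : M, (k : ℤ) ∣ B e x) :
    (Submodule.span ℤ {e} ⊔ LinearMap.ker (B e)).toAddSubgroup.index = 1 ∨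
      (Submodule.span ℤ {e} ⊔ LinearMap.ker (B e)).toAddSubgroup.index = 2 := by
  classical
  have hk' : (k : ℤ) ≠ 0 := by exact_mod_cast hk.ne'
  -- The homomorphism x ↦ (B e x / k) mod 2
  let φ : M →+ ZMod 2 :=
  { toFun := fun x => ((B e x / (k : ℤ) : ℤ) : ZMod 2)
    map_zero' := by simp
    map_add' := by
      intro x y
      obtain ⟨m, hm⟩ := hdual x
      obtain ⟨n, hn⟩ := hdual y
      simp only [map_add, LinearMap.add_apply, hm, hn, ← mul_add,
        Int.mul_ediv_cancel_left _ hk']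
      push_cast
      ring }
  have hφ : ∀ x : M, φ x = ((B e x / (k : ℤ) : ℤ) : ZMod 2) := fun _ => rfl
  have hker : φ.ker = (Submodule.span ℤ {e} ⊔ LinearMap.ker (B e)).toAddSubgroup := by
    ext x
    simp only [AddMonoidHom.mem_ker, Submodule.mem_toAddSubgroup]
    constructor
    · intro hx
      rw [hφ] at hx
      have h2 : (2 : ℤ) ∣ B e x / (k : ℤ) :=
        (ZMod.intCast_zmod_eq_zero_iff_dvd _ 2).mp hx
      obtain ⟨c, hc⟩ := hdual x
      obtain ⟨m, hm⟩ := h2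
      rw [hc, Int.mul_ediv_cancel_left _ hk'] at hm
      have hBx : B e x = (k : ℤ) * (2 * m) := by rw [hc, hm]
      have hz : x + m • e ∈ LinearMap.ker (B e) := by
        rw [LinearMap.mem_ker, map_add, map_zsmul, hBx, he]
        simp only [smul_eq_mul]
        ring
      have hy : (-m) • e ∈ Submodule.span ℤ {e} :=
        zsmul_mem (Submodule.mem_span_singleton_self e) (-m)
      have hx' : x = (-m) • e + (x + m • e) := by
        rw [neg_zsmul]; abel
      rw [hx']
      exact Submodule.add_mem _ (Submodule.mem_sup_left hy) (Submodule.mem_sup_right hz)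
    · intro hx
      have h1 : ∀ a ∈ Submodule.span ℤ {e}, φ a = 0 := by
        intro a ha
        obtain ⟨c, rfl⟩ := Submodule.mem_span_singleton.mp ha
        rw [hφ, LinearMap.map_smul, smul_eq_mul, he,
          show c * -(2 * (k : ℤ)) = (k : ℤ) * (-(2 * c)) by ring,
          Int.mul_ediv_cancel_left _ hk']
        exact (ZMod.intCast_zmod_eq_zero_iff_dvd _ 2).mpr ⟨-c, by ring⟩
      have h2 : ∀ a ∈ LinearMap.ker (B e), φ a = 0 := by
        intro a ha
        rw [hφ, LinearMap.mem_ker.mp ha]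
        simp
      obtain ⟨y, hy, z, hz, rfl⟩ := Submodule.mem_sup.mp hx
      rw [map_add, h1 y hy, h2 z hz, add_zero]
  have hidx : (Submodule.span ℤ {e} ⊔ LinearMap.ker (B e)).toAddSubgroup.index ∣ 2 := by
    rw [← hker, AddSubgroup.index_ker]
    have h := AddSubgroup.card_addSubgroup_dvd_card φ.range
    simpa using h
  exact (Nat.prime_two).eq_one_or_self_of_dvd _ hidx
end

section
/- There is no primitive vector e = (x, y, z, t) ∈ ℤ⁴ with gcd(x,y,z,t) = 1 satisfying both 2xy − 2z² + 4d't² = −8m and the divisibility conditions 4m | x, 4m | y, 2m | z, where m = p_{i₁}⋯p_{i_s} is a product of distinct odd primes dividing the squarefree odd integer d'. -/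
/-- No primitive vector `(x,y,z,t) ∈ ℤ⁴` satisfies `2xy − 2z² + 4d't² = −8m` together with
`4m ∣ x`, `4m ∣ y`, `2m ∣ z`, where `m` is a (positive) divisor of the squarefree odd
integer `d'` (i.e. a product of distinct odd primes dividing `d'`). -/
theorem stmt11 (d' m : ℤ) (hodd : Odd d') (hsf : Squarefree d')
    (hm : m ∣ d') (hmpos : 0 < m) :
    ¬∃ x y z t : ℤ,
      Int.gcd (Int.gcd (Int.gcd x y) z) t = 1 ∧
      2 * x * y - 2 * z ^ 2 + 4 * d' * t ^ 2 = -(8 * m) ∧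
      4 * m ∣ x ∧ 4 * m ∣ y ∧ 2 * m ∣ z := by
  rintro ⟨x, y, z, t, hg, heq, ⟨x', hx⟩, ⟨y', hy⟩, ⟨z', hz⟩⟩
  subst hx hy hz
  -- d' * t^2 is even
  have hdt : (2 : ℤ) ∣ d' * t ^ 2 := by
    refine ⟨-m - 4 * (m * x') * (m * y') + (m * z') ^ 2, ?_⟩
    nlinarith [heq]
  have ht : (2 : ℤ) ∣ t := by
    rcases Int.even_or_odd t with he | ho
    · exact he.two_dvd
    · exfalso
      have h1 : Odd (d' * t ^ 2) := hodd.mul (ho.pow)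
      have h2 : Even (d' * t ^ 2) := by rcases hdt with ⟨c, hc⟩; exact ⟨c, by omega⟩
      exact (Int.not_odd_iff_even.mpr h2) h1
  have h2x : (2 : ℤ) ∣ 4 * m * x' := ⟨2 * m * x', by ring⟩
  have h2y : (2 : ℤ) ∣ 4 * m * y' := ⟨2 * m * y', by ring⟩
  have h2z : (2 : ℤ) ∣ 2 * m * z' := ⟨m * z', by ring⟩
  have : (2 : ℤ) ∣ (Int.gcd (Int.gcd (Int.gcd (4 * m * x') (4 * m * y')) (2 * m * z')) t : ℤ) :=
    Int.dvd_coe_gcd (Int.dvd_coe_gcd (Int.dvd_coe_gcd h2x h2y) h2z) ht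
  rw [hg] at this
  norm_num at this
end
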